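/- arXiv:2103.10743 — 2 statements merged into one kernel-verified Lean document; each statement's English description precedes it below -/
import Mathlib

section
/- Let c : ℝⁿ × ℝᵐ → ℝ^{n_c} be C¹ with |D_x c| + |D_v c| ≤ C and D_v c Lipschitz with constant C on a neighborhood of the relevant points. Suppose (x̃, ṽ) satisfies c(x̃,ṽ) ≤ 0 and there exist w with |w| ≤ C and ε > 0 such that c(x̃,ṽ) + D_v c(x̃,ṽ)w ≤ -ε. Then there exist δ > 0 and C' > 0 (depending only on C and ε) such that for every x with |x - x̃| ≤ δ, the point v := ṽ + θw with θ = 2C'|x-x̃|/ε satisfies c(x,v) ≤ 0 and |v - ṽ| ≤ C·C'·(2/ε)|x - x̃|. -/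
set_option maxHeartbeats 1000000

lemma abs_coord_le_norm {k : ℕ} (y : EuclideanSpace ℝ (Fin k)) (i : Fin k) : |y i| ≤ ‖y‖ := by
  rw [EuclideanSpace.norm_eq]
  have h : (y i)^2 ≤ ∑ j, ‖y j‖^2 := by
    have := Finset.single_le_sum (f := fun j => ‖y j‖^2) (fun j _ => sq_nonneg _) (Finset.mem_univ i)
    simpa [Real.norm_eq_abs, sq_abs] using this
  calc |y i| = Real.sqrt ((y i)^2) := (Real.sqrt_sq_eq_abs _).symm
    _ ≤ _ := Real.sqrt_le_sqrt h

/-- Metric regularity for mixed constraints under an inward-pointing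
(Mangasarian–Fromovitz) condition: near a feasible pair (x̃,ṽ), for each x close to x̃
the control v = ṽ + θw with θ = 2C'|x-x̃|/ε is feasible and |v-ṽ| ≤ C·C'·(2/ε)|x-x̃|. -/
theorem metric_regularity_mixed_constraints {n m nc : ℕ}
    (c : EuclideanSpace ℝ (Fin n) × EuclideanSpace ℝ (Fin m) → EuclideanSpace ℝ (Fin nc))
    (Dc : EuclideanSpace ℝ (Fin n) × EuclideanSpace ℝ (Fin m) →
      (EuclideanSpace ℝ (Fin n) × EuclideanSpace ℝ (Fin m)) →L[ℝ] EuclideanSpace ℝ (Fin nc))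
    (C ε : ℝ) (hC : 0 < C) (hε : 0 < ε)
    (hdiff : ∀ p, HasFDerivAt c (Dc p) p)
    (hbound : ∀ p, ‖Dc p‖ ≤ C)
    (hlip : LipschitzWith (Real.toNNReal C) Dc)
    (xt : EuclideanSpace ℝ (Fin n)) (vt w : EuclideanSpace ℝ (Fin m))
    (hfeas : ∀ i, c (xt, vt) i ≤ 0)
    (hw : ‖w‖ ≤ C)
    (hinward : ∀ i, c (xt, vt) i + Dc (xt, vt) (0, w) i ≤ -ε) :
    ∃ δ > (0:ℝ), ∃ C' > (0:ℝ), ∀ x : EuclideanSpace ℝ (Fin n), ‖x - xt‖ ≤ δ →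
      (∀ i, c (x, vt + (2 * C' * ‖x - xt‖ / ε) • w) i ≤ 0) ∧
      ‖(vt + (2 * C' * ‖x - xt‖ / ε) • w) - vt‖ ≤ C * C' * (2 / ε) * ‖x - xt‖ := by
  set K : ℝ := 1 + 2*C*C/ε with hKdef
  have hK : 0 < K := by positivity
  refine ⟨min (ε/(2*C)) (1/(K*K)), by positivity, C, hC, ?_⟩
  intro x hx
  set r : ℝ := ‖x - xt‖ with hrdef
  have hr0 : 0 ≤ r := norm_nonneg _
  have hr1 : r ≤ ε/(2*C) := le_trans hx (min_le_left _ _)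
  have hr2 : r ≤ 1/(K*K) := le_trans hx (min_le_right _ _)
  set θ : ℝ := 2 * C * r / ε with hθdef
  have hθ0 : 0 ≤ θ := by positivity
  have hθ1 : θ ≤ 1 := by
    rw [hθdef, div_le_one hε]
    calc 2 * C * r ≤ 2 * C * (ε / (2*C)) := by
          exact mul_le_mul_of_nonneg_left hr1 (by positivity)
      _ = ε := by field_simp
  set v : EuclideanSpace ℝ (Fin m) := vt + θ • w with hvdef
  set p0 : EuclideanSpace ℝ (Fin n) × EuclideanSpace ℝ (Fin m) := (xt, vt) with hp0
  set p1 : EuclideanSpace ℝ (Fin n) × EuclideanSpace ℝ (Fin m) := (x, v) with hp1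
  have hvsub : v - vt = θ • w := by rw [hvdef]; abel
  have hnv : ‖v - vt‖ = θ * ‖w‖ := by rw [hvsub, norm_smul, Real.norm_eq_abs, abs_of_nonneg hθ0]
  have hnvC : ‖v - vt‖ ≤ θ * C := by
    rw [hnv]; exact mul_le_mul_of_nonneg_left hw hθ0
  constructor
  · -- feasibility
    intro i
    -- Taylor estimate via mean value inequality on the segment
    have hMVT : ‖c p1 - c p0 - Dc p0 (p1 - p0)‖ ≤ (C * ‖p1 - p0‖) * ‖p1 - p0‖ := by
      have seg : Convex ℝ (segment ℝ p0 p1) := convex_segment _ _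
      have hderiv : ∀ p ∈ segment ℝ p0 p1,
          HasFDerivWithinAt (fun q => c q - Dc p0 (q - p0)) (Dc p - Dc p0) (segment ℝ p0 p1) p := by
        intro p _
        have h2 : HasFDerivAt (fun q => Dc p0 (q - p0)) (Dc p0) p := by
          have : (fun q => Dc p0 (q - p0)) = fun q => Dc p0 q - Dc p0 p0 := by
            funext q; rw [map_sub]
          rw [this]
          exact (Dc p0).hasFDerivAt.sub_const _
        exact ((hdiff p).sub h2).hasFDerivWithinAt
      have bound : ∀ p ∈ segment ℝ p0 p1, ‖Dc p - Dc p0‖ ≤ C * ‖p1 - p0‖ := by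
        intro p hp
        obtain ⟨a, b, ha, hb, hab, hpeq⟩ := hp
        have hpp0 : p - p0 = b • (p1 - p0) := by
          rw [← hpeq]; rw [smul_sub]
          have : a • p0 + b • p1 - p0 = b • p1 - b • p0 + (a + b) • p0 - p0 := by
            rw [add_smul]; abel
          rw [this, hab, one_smul]; abel
        have hle : ‖p - p0‖ ≤ ‖p1 - p0‖ := by
          rw [hpp0, norm_smul, Real.norm_eq_abs, abs_of_nonneg hb]
          nlinarith [norm_nonneg (p1 - p0)]
        have hl : ‖Dc p - Dc p0‖ ≤ C * ‖p - p0‖ := by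
          have := hlip.dist_le_mul p p0
          rwa [dist_eq_norm, dist_eq_norm, Real.coe_toNNReal C hC.le] at this
        calc ‖Dc p - Dc p0‖ ≤ C * ‖p - p0‖ := hl
          _ ≤ C * ‖p1 - p0‖ := mul_le_mul_of_nonneg_left hle hC.le
      have := Convex.norm_image_sub_le_of_norm_hasFDerivWithin_le hderiv bound seg
        (left_mem_segment ℝ p0 p1) (right_mem_segment ℝ p0 p1)
      have heq : (fun q => c q - Dc p0 (q - p0)) p1 - (fun q => c q - Dc p0 (q - p0)) p0
          = c p1 - c p0 - Dc p0 (p1 - p0) := by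
        simp only [sub_self, map_zero, sub_zero]
        abel
      rwa [heq] at this
    have hΔ : ‖p1 - p0‖ ≤ r + θ * C := by
      have : ‖p1 - p0‖ = max ‖x - xt‖ ‖v - vt‖ := rfl
      rw [this]
      have h1 : θ * C ≥ 0 := mul_nonneg hθ0 hC.le
      refine max_le (by rw [← hrdef]; linarith) (by linarith [hnvC, hr0])
    -- remainder bound componentwise
    have hΔ0 : 0 ≤ r + θ * C := by positivity
    have hR : (c p1 - c p0 - Dc p0 (p1 - p0)) i ≤ C * ((r + θ*C) * (r + θ*C)) := by
      calc (c p1 - c p0 - Dc p0 (p1 - p0)) i ≤ |(c p1 - c p0 - Dc p0 (p1 - p0)) i| := le_abs_self _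
        _ ≤ ‖c p1 - c p0 - Dc p0 (p1 - p0)‖ := abs_coord_le_norm _ i
        _ ≤ (C * ‖p1 - p0‖) * ‖p1 - p0‖ := hMVT
        _ = C * (‖p1 - p0‖ * ‖p1 - p0‖) := by ring
        _ ≤ C * ((r + θ*C) * (r + θ*C)) :=
            mul_le_mul_of_nonneg_left (mul_le_mul hΔ hΔ (norm_nonneg _) hΔ0) hC.le
    -- linear part split
    have hsplit : p1 - p0 = ((x - xt, 0) : EuclideanSpace ℝ (Fin n) × EuclideanSpace ℝ (Fin m))
        + θ • ((0, w) : EuclideanSpace ℝ (Fin n) × EuclideanSpace ℝ (Fin m)) := by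
      have h1 : (p1 - p0).1 = x - xt := rfl
      have h2 : (p1 - p0).2 = v - vt := rfl
      apply Prod.ext
      · simp [h1, Prod.fst_add, Prod.smul_fst]
      · simp [h2, hvsub, Prod.snd_add, Prod.smul_snd]
    have hlin : Dc p0 (p1 - p0) i = Dc p0 (x - xt, 0) i + θ * Dc p0 (0, w) i := by
      rw [hsplit, map_add, map_smul]
      rfl
    have hlin1 : Dc p0 (x - xt, 0) i ≤ C * r := by
      calc Dc p0 (x - xt, 0) i ≤ |Dc p0 (x - xt, 0) i| := le_abs_self _
        _ ≤ ‖Dc p0 (x - xt, 0)‖ := abs_coord_le_norm _ i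
        _ ≤ ‖Dc p0‖ * ‖((x - xt, 0) : EuclideanSpace ℝ (Fin n) × EuclideanSpace ℝ (Fin m))‖ :=
            (Dc p0).le_opNorm _
        _ ≤ C * r := by
            have hn : ‖((x - xt, 0) : EuclideanSpace ℝ (Fin n) × EuclideanSpace ℝ (Fin m))‖
                = max ‖x - xt‖ ‖(0 : EuclideanSpace ℝ (Fin m))‖ := rfl
            rw [hn, norm_zero, max_eq_left hr0]
            exact mul_le_mul_of_nonneg_right (hbound p0) hr0
    have hlin2 : θ * Dc p0 (0, w) i ≤ θ * (-ε - c p0 i) := by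
      apply mul_le_mul_of_nonneg_left _ hθ0
      have := hinward i
      rw [hp0]; linarith
    -- assemble
    have hcomp : c p1 i = c p0 i + Dc p0 (p1 - p0) i + (c p1 - c p0 - Dc p0 (p1 - p0)) i := by
      have : (c p1 - c p0 - Dc p0 (p1 - p0)) i = c p1 i - c p0 i - Dc p0 (p1 - p0) i := rfl
      rw [this]; ring
    have hchain : c p1 i ≤ c p0 i + (C * r + θ * (-ε - c p0 i)) + C * ((r + θ*C) * (r + θ*C)) := by
      rw [hcomp, hlin]; linarith
    have e1 : θ * ε = 2 * C * r := by rw [hθdef]; field_simp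
    have e2 : r + θ * C = r * K := by rw [hθdef, hKdef]; field_simp
    have e3 : r * (K * K) ≤ 1 := by
      rw [← le_div_iff₀ (by positivity)]
      simpa [one_div] using hr2
    have hc0 : c p0 i ≤ 0 := hfeas i
    have hnonpos : (1 - θ) * c p0 i ≤ 0 := mul_nonpos_of_nonneg_of_nonpos (by linarith) hc0
    have hCr : C * r * (r * (K * K) - 1) ≤ 0 :=
      mul_nonpos_of_nonneg_of_nonpos (by positivity) (by linarith)
    have : c p1 i ≤ 0 := by
      rw [e2] at hchain
      nlinarith [hchain, hnonpos, hCr, e1]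
    exact this
  · -- norm bound
    calc ‖v - vt‖ ≤ θ * C := hnvC
      _ = C * C * (2/ε) * r := by rw [hθdef]; field_simp
end

section
/- Let (γ_k, v_k) ⇀ (γ̄, v̄) with γ_k → γ̄ uniformly on [0,T] and v_k ⇀ v̄ weakly in L²(0,T;ℝᵐ). Let c : ℝⁿ × ℝᵐ → ℝ be C¹, convex in v, with |D_x c| + |D_v c| ≤ C on the relevant bounded region and D_v c(γ̄(·), v̄(·)) ∈ L². If c(γ_k(t), v_k(t)) ≤ 0 for a.e. t and all k, then c(γ̄(t), v̄(t)) ≤ 0 for a.e. t ∈ (0,T). -/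
open MeasureTheory
open scoped RealInnerProductSpace

lemma convexOn_grad_ineq {E : Type*} [NormedAddCommGroup E] [NormedSpace ℝ E]
    {φ : E → ℝ} (hφ : ConvexOn ℝ Set.univ φ) {v : E} {φ' : E →L[ℝ] ℝ}
    (hd : HasFDerivAt φ φ' v) (w : E) : φ v + φ' (w - v) ≤ φ w := by
  set L : ℝ →ᵃ[ℝ] E := AffineMap.lineMap v w with hL
  have hψ : ConvexOn ℝ Set.univ (φ ∘ L) := by
    simpa using hφ.comp_affineMap L
  have hline : HasDerivAt (fun s : ℝ => L s) (w - v) 0 := by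
    simp only [hL, AffineMap.lineMap_apply_module]
    have h1 : HasDerivAt (fun s : ℝ => (1 - s) • v) ((-1:ℝ) • v) 0 := by
      have := ((hasDerivAt_const (0:ℝ) (1:ℝ)).sub (hasDerivAt_id 0)).smul_const v
      norm_num at this; convert this using 1; norm_num
    have h2 : HasDerivAt (fun s : ℝ => s • w) ((1:ℝ) • w) 0 :=
      (hasDerivAt_id 0).smul_const w
    have := h1.add h2
    convert this using 1
    · rfl
    simp [neg_smul, one_smul]; abel
  have hcomp : HasDerivAt (φ ∘ L) (φ' (w - v)) 0 := by
    have h0 : (L (0:ℝ)) = v := by simp [hL]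
    exact (h0 ▸ hd).comp_hasDerivAt 0 hline
  have hs := hψ.le_slope_of_hasDerivAt (Set.mem_univ (0:ℝ)) (Set.mem_univ (1:ℝ))
    one_pos hcomp
  rw [slope_def_field] at hs
  have h0 : (φ ∘ L) 0 = φ v := by simp [hL]
  have h1 : (φ ∘ L) 1 = φ w := by simp [hL]
  rw [h0, h1] at hs
  have : (φ w - φ v) / (1 - 0) = φ w - φ v := by norm_num
  linarith [this ▸ hs]


set_option maxHeartbeats 2000000 in
/-- Weak closedness of mixed state-control constraints: if γ_k → γ̄ uniformly and
v_k ⇀ v̄ weakly in L², with c C¹, convex in v, with bounded derivative and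
D_v c(γ̄(·),v̄(·)) ∈ L², then the constraint c ≤ 0 passes to the limit. -/
theorem mixed_constraint_weakly_closed {n m : ℕ} (T : ℝ) (hT : 0 < T) (C : ℝ)
    (c : EuclideanSpace ℝ (Fin n) × EuclideanSpace ℝ (Fin m) → ℝ)
    (hc1 : ContDiff ℝ 1 c)
    (hcconv : ∀ x : EuclideanSpace ℝ (Fin n), ConvexOn ℝ Set.univ (fun v => c (x, v)))
    (hder : ∀ p, ‖fderiv ℝ c p‖ ≤ C)
    (γk : ℕ → ℝ → EuclideanSpace ℝ (Fin n))
    (vk : ℕ → ℝ → EuclideanSpace ℝ (Fin m))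
    (γbar : ℝ → EuclideanSpace ℝ (Fin n))
    (vbar : ℝ → EuclideanSpace ℝ (Fin m))
    (hγcont : ∀ k, ContinuousOn (γk k) (Set.Icc 0 T))
    (hγunif : TendstoUniformlyOn γk γbar Filter.atTop (Set.Icc 0 T))
    (hvk : ∀ k, MemLp (vk k) 2 (volume.restrict (Set.Ioc (0:ℝ) T)))
    (hvbar : MemLp vbar 2 (volume.restrict (Set.Ioc (0:ℝ) T)))
    (hweak : ∀ g : ℝ → EuclideanSpace ℝ (Fin m),
      MemLp g 2 (volume.restrict (Set.Ioc (0:ℝ) T)) →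
      Filter.Tendsto (fun k => ∫ t in Set.Ioc (0:ℝ) T, ⟪vk k t, g t⟫)
        Filter.atTop (nhds (∫ t in Set.Ioc (0:ℝ) T, ⟪vbar t, g t⟫)))
    (hDvL2 : MemLp (fun t => fderiv ℝ c (γbar t, vbar t)) 2
      (volume.restrict (Set.Ioc (0:ℝ) T)))
    (hconstr : ∀ k, ∀ᵐ t ∂(volume.restrict (Set.Ioc (0:ℝ) T)),
      c (γk k t, vk k t) ≤ 0) :
    ∀ᵐ t ∂(volume.restrict (Set.Ioc (0:ℝ) T)), c (γbar t, vbar t) ≤ 0 := by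
  set μ := volume.restrict (Set.Ioc (0:ℝ) T) with hμ
  haveI : IsFiniteMeasure μ := by
    constructor
    rw [hμ, Measure.restrict_apply_univ]
    exact measure_Ioc_lt_top
  have hC0 : 0 ≤ C := le_trans (norm_nonneg _) (hder (0, 0))
  have hcd : Differentiable ℝ c := hc1.differentiable one_ne_zero
  have hlip : ∀ p q : EuclideanSpace ℝ (Fin n) × EuclideanSpace ℝ (Fin m),
      |c p - c q| ≤ C * ‖p - q‖ := by
    intro p q
    have := Convex.norm_image_sub_le_of_norm_fderiv_le
      (fun x (_ : x ∈ Set.univ) => hcd x)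
      (fun x _ => hder x) convex_univ (Set.mem_univ q) (Set.mem_univ p)
    simpa [Real.norm_eq_abs] using this
  have hγbarcont : ContinuousOn γbar (Set.Icc 0 T) :=
    hγunif.continuousOn (Filter.Eventually.of_forall hγcont).frequently
  have hγmeas : AEStronglyMeasurable γbar μ :=
    (hγbarcont.mono Set.Ioc_subset_Icc_self).aestronglyMeasurable measurableSet_Ioc
  have hvmeas : AEStronglyMeasurable vbar μ := hvbar.aestronglyMeasurable
  have hpair : AEStronglyMeasurable (fun t => (γbar t, vbar t)) μ := hγmeas.prodMk hvmeas
  set f : ℝ → ℝ := fun t => c (γbar t, vbar t) with hfdef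
  have hfmeas : AEStronglyMeasurable f μ := hc1.continuous.comp_aestronglyMeasurable hpair
  set D : ℝ → (EuclideanSpace ℝ (Fin n) × EuclideanSpace ℝ (Fin m)) →L[ℝ] ℝ :=
    fun t => fderiv ℝ c (γbar t, vbar t) with hD
  set g₀ : ℝ → EuclideanSpace ℝ (Fin m) := fun t =>
    (InnerProductSpace.toDual ℝ (EuclideanSpace ℝ (Fin m))).symm
      ((D t).comp (ContinuousLinearMap.inr ℝ _ _)) with hg₀def
  have hg₀ : ∀ t u, ⟪u, g₀ t⟫ = (D t) (0, u) := by
    intro t u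
    rw [real_inner_comm]
    simp [hg₀def, InnerProductSpace.toDual_symm_apply]
  have hnorm0 : ∀ u : EuclideanSpace ℝ (Fin m),
      ‖((0 : EuclideanSpace ℝ (Fin n)), u)‖ = ‖u‖ := by
    intro u
    rw [Prod.norm_def]
    simp [max_eq_right (norm_nonneg u)]
  have hg₀norm : ∀ t, ‖g₀ t‖ ≤ C := by
    intro t
    rw [hg₀def]
    simp only [LinearIsometryEquiv.norm_map]
    refine ContinuousLinearMap.opNorm_le_bound _ hC0 (fun u => ?_)
    have h1 : ‖(D t) ((0 : EuclideanSpace ℝ (Fin n)), u)‖ ≤ ‖D t‖ * ‖((0 : EuclideanSpace ℝ (Fin n)), u)‖ :=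
      (D t).le_opNorm _
    simp only [ContinuousLinearMap.comp_apply, ContinuousLinearMap.inr_apply]
    calc ‖(D t) ((0 : EuclideanSpace ℝ (Fin n)), u)‖
        ≤ ‖D t‖ * ‖u‖ := by rwa [hnorm0] at h1
      _ ≤ C * ‖u‖ := mul_le_mul_of_nonneg_right (hder _) (norm_nonneg u)
  have hg₀meas : AEStronglyMeasurable g₀ μ := by
    have hcont : Continuous (fun p : EuclideanSpace ℝ (Fin n) × EuclideanSpace ℝ (Fin m) =>
        (InnerProductSpace.toDual ℝ (EuclideanSpace ℝ (Fin m))).symm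
          ((fderiv ℝ c p).comp (ContinuousLinearMap.inr ℝ _ _))) := by
      apply (LinearIsometryEquiv.continuous _).comp
      exact (((ContinuousLinearMap.compL ℝ (EuclideanSpace ℝ (Fin m))
        (EuclideanSpace ℝ (Fin n) × EuclideanSpace ℝ (Fin m)) ℝ).flip
        (ContinuousLinearMap.inr ℝ _ _)).continuous).comp (hc1.continuous_fderiv one_ne_zero)
    exact hcont.comp_aestronglyMeasurable hpair
  -- measurable version of f and the bad set A
  have hff' : f =ᵐ[μ] hfmeas.mk f := hfmeas.ae_eq_mk
  set f' : ℝ → ℝ := hfmeas.mk f with hf'def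
  set A : Set ℝ := {t | 0 < f' t} with hAdef
  have hA : MeasurableSet A :=
    measurableSet_lt measurable_const hfmeas.stronglyMeasurable_mk.measurable
  set g : ℝ → EuclideanSpace ℝ (Fin m) := A.indicator g₀ with hgdef
  have hgmeas : AEStronglyMeasurable g μ := hg₀meas.indicator hA
  have hg2 : MemLp g 2 μ := by
    refine MemLp.of_bound hgmeas C (Filter.Eventually.of_forall (fun t => ?_))
    by_cases ht : t ∈ A
    · rw [hgdef, Set.indicator_of_mem ht]; exact hg₀norm t
    · rw [hgdef, Set.indicator_of_notMem ht]; simpa using hC0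
  -- integrability facts
  obtain ⟨Mγ, hMγ⟩ : ∃ M, ∀ t ∈ Set.Icc (0:ℝ) T, ‖γbar t‖ ≤ M :=
    isCompact_Icc.exists_bound_of_continuousOn hγbarcont
  have hvint : Integrable vbar μ := hvbar.integrable one_le_two
  have hvkint : ∀ k, Integrable (vk k) μ := fun k => (hvk k).integrable one_le_two
  have hprodnorm : ∀ (x : EuclideanSpace ℝ (Fin n)) (v : EuclideanSpace ℝ (Fin m)),
      ‖(x, v)‖ ≤ ‖x‖ + ‖v‖ := by
    intro x v
    rw [Prod.norm_def]
    exact max_le (le_add_of_nonneg_right (norm_nonneg _)) (le_add_of_nonneg_left (norm_nonneg _))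
  have hfint : Integrable f μ := by
    have hgint : Integrable (fun t => (|c (0,0)| + C * Mγ) + C * ‖vbar t‖) μ := by
      have := (integrable_const (|c (0,0)| + C * Mγ)).add (hvint.norm.const_mul C)
      simpa using this
    refine Integrable.mono' hgint hfmeas ?_
    filter_upwards [ae_restrict_mem measurableSet_Ioc] with t ht
    have h1 : |c (γbar t, vbar t) - c (0, 0)| ≤ C * ‖((γbar t, vbar t) :
        EuclideanSpace ℝ (Fin n) × EuclideanSpace ℝ (Fin m)) - (0, 0)‖ := hlip _ _
    have h2 : ‖((γbar t, vbar t) :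
        EuclideanSpace ℝ (Fin n) × EuclideanSpace ℝ (Fin m)) - (0, 0)‖ ≤ ‖γbar t‖ + ‖vbar t‖ := by
      simpa using hprodnorm (γbar t) (vbar t)
    have h3 : ‖γbar t‖ ≤ Mγ := hMγ t (Set.Ioc_subset_Icc_self ht)
    have h4 : C * ‖((γbar t, vbar t) :
        EuclideanSpace ℝ (Fin n) × EuclideanSpace ℝ (Fin m)) - (0, 0)‖ ≤ C * (Mγ + ‖vbar t‖) := by
      apply mul_le_mul_of_nonneg_left _ hC0
      exact h2.trans (by linarith)
    have h5 : |f t| ≤ |c (0,0)| + C * (Mγ + ‖vbar t‖) := by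
      have := abs_sub_abs_le_abs_sub (c (γbar t, vbar t)) (c (0,0))
      simp only [hfdef]
      nlinarith [abs_nonneg (c (γbar t, vbar t)), h1, h4]
    simp only [Real.norm_eq_abs]
    linarith [h5]
  have hinner_bar : Integrable (fun t => ⟪vbar t, g₀ t⟫) μ := by
    refine Integrable.mono' (hvint.norm.const_mul C) (hvmeas.inner hg₀meas) ?_
    refine Filter.Eventually.of_forall (fun t => ?_)
    calc ‖⟪vbar t, g₀ t⟫‖ ≤ ‖vbar t‖ * ‖g₀ t‖ := norm_inner_le_norm _ _
      _ ≤ C * ‖vbar t‖ := by nlinarith [norm_nonneg (vbar t), hg₀norm t, hC0]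
  have hinner_k : ∀ k, Integrable (fun t => ⟪vk k t, g₀ t⟫) μ := by
    intro k
    refine Integrable.mono' ((hvkint k).norm.const_mul C)
      ((hvk k).aestronglyMeasurable.inner hg₀meas) ?_
    refine Filter.Eventually.of_forall (fun t => ?_)
    calc ‖⟪vk k t, g₀ t⟫‖ ≤ ‖vk k t‖ * ‖g₀ t‖ := norm_inner_le_norm _ _
      _ ≤ C * ‖vk k t‖ := by nlinarith [norm_nonneg (vk k t), hg₀norm t, hC0]
  -- weak convergence specialized to A
  have hrw : ∀ w : ℝ → EuclideanSpace ℝ (Fin m),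
      (∫ t, ⟪w t, g t⟫ ∂μ) = ∫ t in A, ⟪w t, g₀ t⟫ ∂μ := by
    intro w
    rw [← integral_indicator hA]
    apply integral_congr_ae
    refine Filter.Eventually.of_forall (fun t => ?_)
    show ⟪w t, A.indicator g₀ t⟫ = A.indicator (fun s => ⟪w s, g₀ s⟫) t
    by_cases ht : t ∈ A
    · rw [Set.indicator_of_mem ht, Set.indicator_of_mem ht]
    · rw [Set.indicator_of_notMem ht, Set.indicator_of_notMem ht, inner_zero_right]
  have hweakA : Filter.Tendsto (fun k => ∫ t in A, ⟪vk k t, g₀ t⟫ ∂μ)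
      Filter.atTop (nhds (∫ t in A, ⟪vbar t, g₀ t⟫ ∂μ)) := by
    have h := hweak g hg2
    simp only [hrw] at h
    exact h
  -- key estimate
  have hIle : ∀ ε > (0:ℝ), (∫ t in A, f t ∂μ) ≤ C * ε * (μ A).toReal := by
    intro ε hε
    have hev : ∀ᶠ k in Filter.atTop, ∀ x ∈ Set.Icc (0:ℝ) T, dist (γbar x) (γk k x) < ε :=
      Metric.tendstoUniformlyOn_iff.mp hγunif ε hε
    have key : ∀ᶠ k in Filter.atTop, (∫ t in A, f t ∂μ) ≤
        C * ε * (μ A).toReal +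
          ((∫ t in A, ⟪vbar t, g₀ t⟫ ∂μ) - ∫ t in A, ⟪vk k t, g₀ t⟫ ∂μ) := by
      filter_upwards [hev] with k hk
      have hae : ∀ᵐ t ∂(μ.restrict A),
          f t ≤ C * ε + (⟪vbar t, g₀ t⟫ - ⟪vk k t, g₀ t⟫) := by
        apply ae_restrict_of_ae
        filter_upwards [hconstr k, ae_restrict_mem measurableSet_Ioc] with t hc0 htI
        -- convexity step
        have hdrv : HasFDerivAt (fun v => c (γbar t, v))
            ((D t).comp (ContinuousLinearMap.inr ℝ _ _)) (vbar t) :=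
          (hcd (γbar t, vbar t)).hasFDerivAt.comp (vbar t)
            (hasFDerivAt_prodMk_right (γbar t) (vbar t))
        have hconv := convexOn_grad_ineq (hcconv (γbar t)) hdrv (vk k t)
        have hDval : ((D t).comp (ContinuousLinearMap.inr ℝ _ _)) (vk k t - vbar t)
            = ⟪vk k t, g₀ t⟫ - ⟪vbar t, g₀ t⟫ := by
          rw [ContinuousLinearMap.comp_apply, ContinuousLinearMap.inr_apply,
            ← hg₀ t (vk k t - vbar t), inner_sub_left]
        -- Lipschitz step
        have hlipt : |c (γbar t, vk k t) - c (γk k t, vk k t)| ≤ C * ε := by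
          have h1 := hlip (γbar t, vk k t) (γk k t, vk k t)
          have h2 : ‖((γbar t, vk k t) : EuclideanSpace ℝ (Fin n) ×
              EuclideanSpace ℝ (Fin m)) - (γk k t, vk k t)‖ = ‖γbar t - γk k t‖ := by
            rw [Prod.mk_sub_mk, sub_self, Prod.norm_def]
            simp [max_eq_left (norm_nonneg _)]
          rw [h2] at h1
          refine h1.trans ?_
          apply mul_le_mul_of_nonneg_left _ hC0
          rw [← dist_eq_norm]
          exact le_of_lt (hk t (Set.Ioc_subset_Icc_self htI))
        have habs := abs_le.mp hlipt
        rw [hDval] at hconv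
        simp only [hfdef]
        linarith [hconv, habs.2, hc0]
      have hfiA : Integrable f (μ.restrict A) := hfint.restrict
      have hRI : Integrable (fun t => C * ε + (⟪vbar t, g₀ t⟫ - ⟪vk k t, g₀ t⟫))
          (μ.restrict A) :=
        (integrable_const _).add ((hinner_bar.restrict.sub (hinner_k k).restrict))
      have hmono := integral_mono_ae hfiA hRI hae
      have hsubint : Integrable (fun t => ⟪vbar t, g₀ t⟫ - ⟪vk k t, g₀ t⟫)
          (μ.restrict A) := hinner_bar.restrict.sub ((hinner_k k).restrict)
      have hrhs : (∫ t in A, (C * ε + (⟪vbar t, g₀ t⟫ - ⟪vk k t, g₀ t⟫)) ∂μ)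
          = (μ A).toReal * (C * ε) +
            ((∫ t in A, ⟪vbar t, g₀ t⟫ ∂μ) - ∫ t in A, ⟪vk k t, g₀ t⟫ ∂μ) := by
        rw [integral_add (integrable_const _) hsubint,
          integral_sub hinner_bar.restrict ((hinner_k k).restrict), integral_const,
          measureReal_restrict_apply_univ, measureReal_def, smul_eq_mul]
      rw [hrhs] at hmono
      have : (μ A).toReal * (C * ε) = C * ε * (μ A).toReal := by ring
      linarith [hmono, this ▸ hmono]
    have hlim : Filter.Tendsto (fun k => C * ε * (μ A).toReal +
        ((∫ t in A, ⟪vbar t, g₀ t⟫ ∂μ) - ∫ t in A, ⟪vk k t, g₀ t⟫ ∂μ))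
        Filter.atTop (nhds (C * ε * (μ A).toReal)) := by
      have h1 : Filter.Tendsto (fun k => (∫ t in A, ⟪vbar t, g₀ t⟫ ∂μ) -
          ∫ t in A, ⟪vk k t, g₀ t⟫ ∂μ) Filter.atTop (nhds 0) := by
        have h2 := (tendsto_const_nhds (x := (∫ t in A, ⟪vbar t, g₀ t⟫ ∂μ))
          (f := Filter.atTop (α := ℕ))).sub hweakA
        simpa using h2
      have h3 := (tendsto_const_nhds (x := C * ε * (μ A).toReal)
        (f := Filter.atTop (α := ℕ))).add h1
      simpa using h3
    exact ge_of_tendsto hlim key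
  -- conclude the set integral is ≤ 0
  have hI0 : (∫ t in A, f t ∂μ) ≤ 0 := by
    refine le_of_forall_pos_le_add (fun ε hε => ?_)
    have hM : (0:ℝ) ≤ (μ A).toReal := ENNReal.toReal_nonneg
    set K : ℝ := C * (μ A).toReal + 1 with hK
    have hKpos : 0 < K := by positivity
    have := hIle (ε / K) (by positivity)
    have hle : C * (ε / K) * (μ A).toReal ≤ ε := by
      rw [show C * (ε / K) * (μ A).toReal = ε * (C * (μ A).toReal) / K by ring,
        div_le_iff₀ hKpos]
      nlinarith [hC0, hM, hε]
    linarith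
  -- μ A = 0
  have hμA : μ A = 0 := by
    by_contra hne
    have hpos : 0 < μ A := lt_of_le_of_ne (zero_le) (Ne.symm hne)
    have hnn : 0 ≤ᵐ[μ.restrict A] f' :=
      (ae_restrict_mem hA).mono fun t ht => le_of_lt ht
    have hfi' : IntegrableOn f' A μ := (hfint.congr hff').integrableOn
    have hsup : Function.support f' ∩ A = A := by
      apply Set.inter_eq_right.mpr
      intro t ht
      exact ne_of_gt ht
    have hIf' : (∫ t in A, f' t ∂μ) ≤ 0 := by
      have heq : (∫ t in A, f t ∂μ) = ∫ t in A, f' t ∂μ :=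
        setIntegral_congr_ae hA (hff'.mono fun t h _ => h)
      linarith [heq ▸ hI0]
    have := (setIntegral_pos_iff_support_of_nonneg_ae hnn hfi').mpr
      (by rw [hsup]; exact hpos)
    linarith
  -- finish
  have hnotA : ∀ᵐ t ∂μ, t ∉ A := measure_eq_zero_iff_ae_notMem.mp hμA
  filter_upwards [hnotA, hff'] with t ht hft
  have : f' t ≤ 0 := not_lt.mp ht
  calc c (γbar t, vbar t) = f t := rfl
    _ = f' t := hft
    _ ≤ 0 := this
end
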